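/- Take e = 2, Λ = w_1Λ_1 + w_2Λ_2 with w_1, w_2 ∈ ℤ_{≥0} and w_1 + w_2 ≥ 1, and μ = Λ − b_1α_1 − b_2α_2 with b_1, b_2 ∈ ℤ_{≥0}, (b_1,b_2) ≠ (0,0), and μ dominant. Set b_{12} = min(b_1 − 1, b_2) and b_{21} = min(b_1 + 1, b_2). Then: k⁺_{12} = b_{12} if w_2 > 0 or b_1 > b_2, and k⁺_{12} = b_{12} − 1 if w_2 = 0 and b_1 = b_2; k⁻_{12} = b_{21} if w_1 > 0 or b_2 > b_1, and k⁻_{12} = b_{21} − 1 if w_1 = 0 and b_1 = b_2. -/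

import Mathlib

namespace SleHat

/-- The standard basis vector `e_k` of `ℝ^{e+2}` (realized inside `ℕ → ℝ`). -/
def eVec (k : ℕ) : ℕ → ℝ := fun m => if m = k then 1 else 0

/-- The standard dot product on `ℝ^{e+2}`, pairing weights and coweights. -/
def dot (e : ℕ) (x y : ℕ → ℝ) : ℝ := ∑ k ∈ Finset.range (e + 2), x k * y k

/-- The simple roots of `ŝl_e`: `α_i = e_i − e_{i+1}` for `1 ≤ i ≤ e−1` and
`α_e = −e_1 + e_e − e_{e+1}`. -/
def simpleRoot (e i : ℕ) : ℕ → ℝ :=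
  if i = e then -eVec 1 + eVec e - eVec (e + 1) else eVec i - eVec (i + 1)

/-- The simple coroots of `ŝl_e`: `α_i^∨ = e_i − e_{i+1}` for `1 ≤ i ≤ e−1` and
`α_e^∨ = e_0 − e_1 + e_e`. -/
def simpleCoroot (e i : ℕ) : ℕ → ℝ :=
  if i = e then eVec 0 - eVec 1 + eVec e else eVec i - eVec (i + 1)

/-- The null root `δ = −e_{e+1}`. -/
def nullRoot (e : ℕ) : ℕ → ℝ := -eVec (e + 1)

/-- `δ^∨ = e_0`. -/
def deltaVee : ℕ → ℝ := eVec 0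

/-- The real roots `α_{ij;n} = e_i − e_j + nδ`. -/
def alphaIJ (e i j : ℕ) (n : ℤ) : ℕ → ℝ := eVec i - eVec j + (n : ℝ) • nullRoot e

/-- `α_{ij;n}` is a positive real root: `i ≠ j` in `{1,…,e}`, with `n ≥ 0` if `i < j` and
`n > 0` if `i > j`. -/
def IsPosRoot (e i j : ℕ) (n : ℤ) : Prop :=
  1 ≤ i ∧ i ≤ e ∧ 1 ≤ j ∧ j ≤ e ∧ i ≠ j ∧ (i < j → 0 ≤ n) ∧ (j < i → 0 < n)

/-- `ν` is dominant: `α_i^∨ · ν ≥ 0` for all `i ∈ {1,…,e}`. -/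
def Dominant (e : ℕ) (ν : ℕ → ℝ) : Prop :=
  ∀ i, 1 ≤ i → i ≤ e → 0 ≤ dot e (simpleCoroot e i) ν

/-- `ν ≤ Λ`: the difference `Λ − ν` is a `ℤ_{≥0}`-combination of the simple roots. -/
def LeRoot (e : ℕ) (ν Λ : ℕ → ℝ) : Prop :=
  ∃ c : ℕ → ℕ, Λ - ν = ∑ i ∈ Finset.Icc 1 e, (c i : ℝ) • simpleRoot e i

/-- The simple reflection `s_i(ν) = ν − (α_i^∨ · ν)·α_i`. -/
def sAct (e i : ℕ) (ν : ℕ → ℝ) : ℕ → ℝ :=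
  ν - dot e (simpleCoroot e i) ν • simpleRoot e i

/-- `ν ∈ supp(Λ)`, i.e. `wν ≤ Λ` for every element `w` of the Weyl group `W` generated by the
simple reflections `s_1, …, s_e` (each `s_i` is an involution, so the elements of `W` are
exactly the products of the generators). -/
def InSupp (e : ℕ) (Λ ν : ℕ → ℝ) : Prop :=
  ∀ L : List ℕ, (∀ i ∈ L, 1 ≤ i ∧ i ≤ e) →
    LeRoot e (L.foldr (fun i x => sAct e i x) ν) Λ

/-- The statistic `k⁺_{ij}` attached to a weight `μ` (for the highest weight `Λ`):
`max({−1} ∪ {n : α_{ij;n} ∈ N_μ})` if `i < j` and `max({0} ∪ {n : α_{ij;n} ∈ N_μ})` if `i > j`,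
where `N_μ` is the set of positive real roots `α` with `μ + α ∈ supp(Λ)`.
The statistic `k⁻_{ij}` is `k⁺_{ji}`. -/
noncomputable def kplus (e : ℕ) (Λ μ : ℕ → ℝ) (i j : ℕ) : ℤ :=
  if i < j then
    sSup ({-1} ∪ {n : ℤ | 0 ≤ n ∧ InSupp e Λ (μ + alphaIJ e i j n)})
  else
    sSup ({0} ∪ {n : ℤ | 0 < n ∧ InSupp e Λ (μ + alphaIJ e i j n)})

/-- The orthogonal projection of `ℝ^{e+2}` onto the subspace
`𝔥* = {h : h_1 + ⋯ + h_e = 0}`. -/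
noncomputable def proj (e : ℕ) (v : ℕ → ℝ) : ℕ → ℝ :=
  fun k => if 1 ≤ k ∧ k ≤ e then v k - (∑ r ∈ Finset.Icc 1 e, v r) / e else v k

/-- The fundamental weight `Λ_i`: the orthogonal projection onto `𝔥*` of
`e_0 + e_1 + ⋯ + e_i`. -/
noncomputable def fundWt (e i : ℕ) : ℕ → ℝ := proj e (∑ k ∈ Finset.range (i + 1), eVec k)

/-- A partition, encoded by its (weakly decreasing, eventually zero) sequence of parts
`p 0 ≥ p 1 ≥ ⋯` (0-indexed rows). -/
def IsPartition (p : ℕ → ℕ) : Prop :=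
  (∀ a b, a ≤ b → p b ≤ p a) ∧ ∃ M, ∀ k, M ≤ k → p k = 0

/-- `b_i(λ)`: the number of boxes of `λ` of residue `≡ i (mod e)`.  Boxes are pairs `(r, c)`
(0-indexed) with `c < p r`; the box `(r, c)` has residue `c − r (mod e)`. -/
noncomputable def resCount (e : ℕ) (p : ℕ → ℕ) (i : ℕ) : ℕ :=
  Set.ncard {rc : ℕ × ℕ | rc.2 < p rc.1 ∧
    ((rc.2 : ℤ) - (rc.1 : ℤ)) % (e : ℤ) = (i : ℤ) % (e : ℤ)}

/-- The weight of a partition: `Λ_e − Σ_{i=1}^e b_i(λ) α_i`. -/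
noncomputable def wtPartition (e : ℕ) (p : ℕ → ℕ) : ℕ → ℝ :=
  fundWt e e - ∑ i ∈ Finset.Icc 1 e, (resCount e p i : ℝ) • simpleRoot e i

end SleHat

namespace SleHat

-- my defs
noncomputable def Wv (w1 w2 a b : ℤ) : ℕ → ℝ := fun k =>
  if k = 0 then ((w1 + w2 : ℤ) : ℝ)
  else if k = 1 then (w1 : ℝ)/2 - (a:ℝ) + (b:ℝ)
  else if k = 2 then -(w1 : ℝ)/2 + (a:ℝ) - (b:ℝ)
  else if k = 3 then (b : ℝ)
  else 0

lemma Wv_congr {w1 w2 a b a' b' : ℤ} (ha : a = a') (hb : b = b') :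
    Wv w1 w2 a b = Wv w1 w2 a' b' := by rw [ha, hb]

lemma fund_eq (w1 w2 : ℤ) : (w1:ℝ) • fundWt 2 1 + (w2:ℝ) • fundWt 2 2 = Wv w1 w2 0 0 := by
  have h1 : (Finset.Icc 1 2 : Finset ℕ) = {1, 2} := by decide
  funext k
  rcases k with _|_|_|_|k <;>
    simp [fundWt, proj, eVec, Wv, Finset.sum_range_succ, h1, Finset.sum_apply] <;> ring

lemma Wv_sub1 (w1 w2 a b c : ℤ) :
    Wv w1 w2 a b - (c:ℝ) • simpleRoot 2 1 = Wv w1 w2 (a + c) b := by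
  funext k
  rcases k with _|_|_|_|k <;>
    simp [Wv, simpleRoot, eVec] <;> push_cast <;> ring

lemma Wv_sub2 (w1 w2 a b c : ℤ) :
    Wv w1 w2 a b - (c:ℝ) • simpleRoot 2 2 = Wv w1 w2 a (b + c) := by
  funext k
  rcases k with _|_|_|_|k <;>
    simp [Wv, simpleRoot, eVec] <;> push_cast <;> ring

lemma Wv_add12 (w1 w2 a b : ℤ) (n : ℤ) :
    Wv w1 w2 a b + alphaIJ 2 1 2 n = Wv w1 w2 (a - 1 - n) (b - n) := by
  funext k
  rcases k with _|_|_|_|k <;>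
    simp [Wv, alphaIJ, nullRoot, eVec] <;> push_cast <;> ring

lemma Wv_add21 (w1 w2 a b : ℤ) (n : ℤ) :
    Wv w1 w2 a b + alphaIJ 2 2 1 n = Wv w1 w2 (a + 1 - n) (b - n) := by
  funext k
  rcases k with _|_|_|_|k <;>
    simp [Wv, alphaIJ, nullRoot, eVec] <;> push_cast <;> ring

lemma dot1 (w1 w2 a b : ℤ) :
    dot 2 (simpleCoroot 2 1) (Wv w1 w2 a b) = ((w1 - 2*a + 2*b : ℤ) : ℝ) := by
  simp [dot, simpleCoroot, eVec, Wv, Finset.sum_range_succ]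
  push_cast; ring

lemma dot2 (w1 w2 a b : ℤ) :
    dot 2 (simpleCoroot 2 2) (Wv w1 w2 a b) = ((w2 + 2*a - 2*b : ℤ) : ℝ) := by
  simp [dot, simpleCoroot, eVec, Wv, Finset.sum_range_succ]
  push_cast; ring

lemma sAct1 (w1 w2 a b : ℤ) :
    sAct 2 1 (Wv w1 w2 a b) = Wv w1 w2 (w1 + 2*b - a) b := by
  rw [sAct, dot1, Wv_sub1]
  exact Wv_congr (by ring) rfl

lemma sAct2 (w1 w2 a b : ℤ) :
    sAct 2 2 (Wv w1 w2 a b) = Wv w1 w2 a (w2 + 2*a - b) := by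
  rw [sAct, dot2, Wv_sub2]
  exact Wv_congr rfl (by ring)



lemma leRoot_iff (w1 w2 a b : ℤ) :
    LeRoot 2 (Wv w1 w2 a b) (Wv w1 w2 0 0) ↔ 0 ≤ a ∧ 0 ≤ b := by
  have h1 : (Finset.Icc 1 2 : Finset ℕ) = {1, 2} := by decide
  constructor
  · rintro ⟨c, hc⟩
    have h3 := congrFun hc 3
    have hone := congrFun hc 1
    simp [h1, Wv, simpleRoot, eVec] at h3 hone
    have hb : (b:ℝ) = (c 2 : ℝ) := by linarith
    have ha : (a:ℝ) = (c 1 : ℝ) := by linarith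
    constructor
    · exact_mod_cast ha ▸ (by positivity : (0:ℝ) ≤ (c 1 : ℝ))
    · exact_mod_cast hb ▸ (by positivity : (0:ℝ) ≤ (c 2 : ℝ))
  · rintro ⟨ha, hb⟩
    refine ⟨fun i => if i = 1 then a.toNat else b.toNat, ?_⟩
    funext k
    have ha' : ((a.toNat : ℕ) : ℝ) = (a : ℝ) := by exact_mod_cast Int.toNat_of_nonneg ha
    have hb' : ((b.toNat : ℕ) : ℝ) = (b : ℝ) := by exact_mod_cast Int.toNat_of_nonneg hb
    rcases k with _|_|_|_|k <;>
      simp [h1, Wv, simpleRoot, eVec, ha', hb'] <;> ring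

lemma insupp_back (Λ ν : ℕ → ℝ) (i : ℕ) (h1 : 1 ≤ i) (h2 : i ≤ 2)
    (hinv : sAct 2 i (sAct 2 i ν) = ν) (h : InSupp 2 Λ (sAct 2 i ν)) : InSupp 2 Λ ν := by
  intro L hL
  have h' := h (L ++ [i]) (by
    intro j hj
    rcases List.mem_append.1 hj with h'|h'
    · exact hL j h'
    · simp at h'; subst h'; exact ⟨h1, h2⟩)
  rw [List.foldr_append] at h'
  simpa [hinv] using h'

lemma orbit (w1 w2 a b : ℤ) (L : List ℕ) (hL : ∀ i ∈ L, 1 ≤ i ∧ i ≤ 2) :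
    ∃ m : ℤ,
      (L.foldr (fun i x => sAct 2 i x) (Wv w1 w2 a b) =
        Wv w1 w2 (a + m^2*(w1+w2) - m*(w2+2*a-2*b)) (b + m^2*(w1+w2) + m*(w1-2*a+2*b))) ∨
      (L.foldr (fun i x => sAct 2 i x) (Wv w1 w2 a b) =
        Wv w1 w2 (w1 + 2*b - a + m^2*(w1+w2) - m*(2*w1+w2-2*a+2*b))
                 (b + m^2*(w1+w2) - m*(w1-2*a+2*b))) := by
  induction L with
  | nil => exact ⟨0, Or.inl (Wv_congr (by ring) (by ring))⟩
  | cons i L ih =>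
    obtain ⟨m, hm | hm⟩ := ih (fun j hj => hL j (List.mem_cons_of_mem i hj))
    · have hi := hL i (List.mem_cons_self)
      have hii : i = 1 ∨ i = 2 := by omega
      rw [List.foldr_cons, hm]
      rcases hii with rfl | rfl
      · rw [sAct1]; exact ⟨-m, Or.inr (Wv_congr (by ring) (by ring))⟩
      · rw [sAct2]; exact ⟨1-m, Or.inr (Wv_congr (by ring) (by ring))⟩
    · have hi := hL i (List.mem_cons_self)
      have hii : i = 1 ∨ i = 2 := by omega
      rw [List.foldr_cons, hm]
      rcases hii with rfl | rfl
      · rw [sAct1]; exact ⟨-m, Or.inl (Wv_congr (by ring) (by ring))⟩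
      · rw [sAct2]; exact ⟨1-m, Or.inl (Wv_congr (by ring) (by ring))⟩

lemma mul_pred_nn (m : ℤ) : 0 ≤ m * (m - 1) := by
  rcases le_or_gt 1 m with h | h
  · nlinarith
  · nlinarith

lemma supp_dom (w1 w2 a b : ℤ) (hw1 : 0 ≤ w1) (hw2 : 0 ≤ w2) (ha : 0 ≤ a) (hb : 0 ≤ b)
    (hX : 0 ≤ w1 - 2*a + 2*b) (hY : 0 ≤ w2 + 2*a - 2*b) :
    InSupp 2 (Wv w1 w2 0 0) (Wv w1 w2 a b) := by
  intro L hL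
  obtain ⟨m, hm | hm⟩ := orbit w1 w2 a b L hL
  · rw [hm, leRoot_iff]
    have h1 := mul_pred_nn m
    have h2 := mul_pred_nn (-m)
    constructor <;> nlinarith [sq_nonneg m]
  · rw [hm, leRoot_iff]
    have h1 := mul_pred_nn m
    have h2 := mul_pred_nn (-m)
    constructor <;> nlinarith [sq_nonneg m, sq_nonneg (m-1)]


lemma sAct2_invol (w1 w2 a b : ℤ) :
    sAct 2 2 (sAct 2 2 (Wv w1 w2 a b)) = Wv w1 w2 a b := by
  rw [sAct2, sAct2]; exact Wv_congr rfl (by ring)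

lemma sAct1_invol (w1 w2 a b : ℤ) :
    sAct 2 1 (sAct 2 1 (Wv w1 w2 a b)) = Wv w1 w2 a b := by
  rw [sAct1, sAct1]; exact Wv_congr (by ring) rfl

lemma part1_insupp (w1 w2 A B n : ℤ) (hw1 : 0 ≤ w1) (hw2 : 0 ≤ w2)
    (hX0 : 0 ≤ w1 - 2*A + 2*B) (hY0 : 0 ≤ w2 + 2*A - 2*B)
    (hcase : 1 ≤ w2 ∨ B < A) (hn0 : 0 ≤ n) (hnA : n ≤ A - 1) (hnB : n ≤ B) :
    InSupp 2 (Wv w1 w2 0 0) (Wv w1 w2 (A-1-n) (B-n)) := by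
  by_cases h2 : 2 ≤ w2 + 2*A - 2*B
  · exact supp_dom _ _ _ _ hw1 hw2 (by omega) (by omega) (by omega) (by omega)
  · apply insupp_back _ _ 2 (by norm_num) (by norm_num) (sAct2_invol _ _ _ _)
    rw [sAct2]
    exact supp_dom _ _ _ _ hw1 hw2 (by omega) (by omega) (by omega) (by omega)

lemma part2_insupp (w1 w2 A B n : ℤ) (hw1 : 1 ≤ w1) (hw2 : w2 = 0) (hAB : A = B)
    (hn0 : 0 ≤ n) (hn : n ≤ A - 2) :
    InSupp 2 (Wv w1 w2 0 0) (Wv w1 w2 (A-1-n) (B-n)) := by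
  apply insupp_back _ _ 2 (by norm_num) (by norm_num) (sAct2_invol _ _ _ _)
  rw [sAct2]
  by_cases h2 : 2 ≤ w1
  · exact supp_dom _ _ _ _ (by omega) (by omega) (by omega) (by omega) (by omega) (by omega)
  · apply insupp_back _ _ 1 (by norm_num) (by norm_num) (sAct1_invol _ _ _ _)
    rw [sAct1]
    exact supp_dom _ _ _ _ (by omega) (by omega) (by omega) (by omega) (by omega) (by omega)

lemma part3_insupp (w1 w2 A B n : ℤ) (hw1 : 0 ≤ w1) (hw2 : 0 ≤ w2)
    (hX0 : 0 ≤ w1 - 2*A + 2*B) (hY0 : 0 ≤ w2 + 2*A - 2*B)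
    (hcase : 1 ≤ w1 ∨ A < B) (hn0 : 0 ≤ n) (hnA : n ≤ A + 1) (hnB : n ≤ B) :
    InSupp 2 (Wv w1 w2 0 0) (Wv w1 w2 (A+1-n) (B-n)) := by
  by_cases h2 : 2 ≤ w1 - 2*A + 2*B
  · exact supp_dom _ _ _ _ hw1 hw2 (by omega) (by omega) (by omega) (by omega)
  · apply insupp_back _ _ 1 (by norm_num) (by norm_num) (sAct1_invol _ _ _ _)
    rw [sAct1]
    exact supp_dom _ _ _ _ hw1 hw2 (by omega) (by omega) (by omega) (by omega)

lemma part4_insupp (w1 w2 A B n : ℤ) (hw1 : w1 = 0) (hw2 : 1 ≤ w2) (hAB : A = B)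
    (hn0 : 0 ≤ n) (hn : n ≤ A - 1) :
    InSupp 2 (Wv w1 w2 0 0) (Wv w1 w2 (A+1-n) (B-n)) := by
  apply insupp_back _ _ 1 (by norm_num) (by norm_num) (sAct1_invol _ _ _ _)
  rw [sAct1]
  by_cases h2 : 2 ≤ w2
  · exact supp_dom _ _ _ _ (by omega) (by omega) (by omega) (by omega) (by omega) (by omega)
  · apply insupp_back _ _ 2 (by norm_num) (by norm_num) (sAct2_invol _ _ _ _)
    rw [sAct2]
    exact supp_dom _ _ _ _ (by omega) (by omega) (by omega) (by omega) (by omega) (by omega)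


/-- For `e = 2`, `Λ = w_1Λ_1 + w_2Λ_2` and dominant
`μ = Λ − b_1α_1 − b_2α_2` with `(b_1, b_2) ≠ (0, 0)`, setting `b_{12} = min(b_1−1, b_2)` and
`b_{21} = min(b_1+1, b_2)`:
`k⁺_{12} = b_{12}` if `w_2 > 0` or `b_1 > b_2`, and `k⁺_{12} = b_{12} − 1` if `w_2 = 0` and
`b_1 = b_2`; `k⁻_{12} = b_{21}` if `w_1 > 0` or `b_2 > b_1`, and `k⁻_{12} = b_{21} − 1` if
`w_1 = 0` and `b_1 = b_2`.  (Recall `k⁻_{12} = k⁺_{21}`.) -/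
theorem kplus_e2 (w1 w2 : ℕ) (hw : 1 ≤ w1 + w2) (b1 b2 : ℕ) (hb : ¬(b1 = 0 ∧ b2 = 0))
    (Λ μ : ℕ → ℝ)
    (hΛ : Λ = (w1 : ℝ) • fundWt 2 1 + (w2 : ℝ) • fundWt 2 2)
    (hμ : μ = Λ - (b1 : ℝ) • simpleRoot 2 1 - (b2 : ℝ) • simpleRoot 2 2)
    (hdom : Dominant 2 μ) :
    ((0 < w2 ∨ b2 < b1) → kplus 2 Λ μ 1 2 = min ((b1 : ℤ) - 1) (b2 : ℤ)) ∧
    ((w2 = 0 ∧ b1 = b2) → kplus 2 Λ μ 1 2 = min ((b1 : ℤ) - 1) (b2 : ℤ) - 1) ∧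
    ((0 < w1 ∨ b1 < b2) → kplus 2 Λ μ 2 1 = min ((b1 : ℤ) + 1) (b2 : ℤ)) ∧
    ((w1 = 0 ∧ b1 = b2) → kplus 2 Λ μ 2 1 = min ((b1 : ℤ) + 1) (b2 : ℤ) - 1) := by
  have hΛ' : Λ = Wv (w1:ℤ) (w2:ℤ) 0 0 := by
    have h := fund_eq (w1:ℤ) (w2:ℤ)
    push_cast at h
    rw [hΛ, h]
  have hμ' : μ = Wv (w1:ℤ) (w2:ℤ) (b1:ℤ) (b2:ℤ) := by
    have e1 : ((b1:ℕ):ℝ) = (((b1:ℤ)):ℝ) := by push_cast; ring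
    have e2 : ((b2:ℕ):ℝ) = (((b2:ℤ)):ℝ) := by push_cast; ring
    rw [hμ, hΛ', e1, e2, Wv_sub1, Wv_sub2]
    exact Wv_congr (by ring) (by ring)
  have hX0 : 0 ≤ (w1:ℤ) - 2*(b1:ℤ) + 2*(b2:ℤ) := by
    have h := hdom 1 (by norm_num) (by norm_num)
    rw [hμ', dot1] at h
    exact_mod_cast h
  have hY0 : 0 ≤ (w2:ℤ) + 2*(b1:ℤ) - 2*(b2:ℤ) := by
    have h := hdom 2 (by norm_num) (by norm_num)
    rw [hμ', dot2] at h
    exact_mod_cast h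
  have hpt12 : ∀ n : ℤ, μ + alphaIJ 2 1 2 n = Wv (w1:ℤ) (w2:ℤ) ((b1:ℤ)-1-n) ((b2:ℤ)-n) :=
    fun n => by rw [hμ', Wv_add12]
  have hpt21 : ∀ n : ℤ, μ + alphaIJ 2 2 1 n = Wv (w1:ℤ) (w2:ℤ) ((b1:ℤ)+1-n) ((b2:ℤ)-n) :=
    fun n => by rw [hμ', Wv_add21]
  refine ⟨?_, ?_, ?_, ?_⟩
  · intro hcase
    rw [kplus, if_pos (by norm_num : (1:ℕ) < 2)]
    apply IsGreatest.csSup_eq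
    constructor
    · rcases le_or_gt 0 (min ((b1:ℤ)-1) (b2:ℤ)) with hK | hK
      · refine Or.inr ⟨hK, ?_⟩
        rw [hpt12, hΛ']
        exact part1_insupp _ _ _ _ _ (by omega) (by omega) hX0 hY0 (by omega) hK
          (by omega) (by omega)
      · exact Or.inl (by simp; omega)
    · rintro n (hn | ⟨hn0, hns⟩)
      · simp at hn; omega
      · have h0 := hns [] (by simp)
        simp only [List.foldr_nil] at h0
        rw [hpt12, hΛ'] at h0
        have := (leRoot_iff _ _ _ _).1 h0
        omega
  · rintro ⟨hw2, hbb⟩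
    rw [kplus, if_pos (by norm_num : (1:ℕ) < 2)]
    apply IsGreatest.csSup_eq
    constructor
    · rcases le_or_gt 0 (min ((b1:ℤ)-1) (b2:ℤ) - 1) with hK | hK
      · refine Or.inr ⟨hK, ?_⟩
        rw [hpt12, hΛ']
        exact part2_insupp _ _ _ _ _ (by omega) (by omega) (by omega) hK (by omega)
      · exact Or.inl (by simp; omega)
    · rintro n (hn | ⟨hn0, hns⟩)
      · simp at hn; omega
      · have h0 := hns [2] (by simp)
        simp only [List.foldr_cons, List.foldr_nil] at h0
        rw [hpt12, hΛ', sAct2] at h0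
        have := (leRoot_iff _ _ _ _).1 h0
        omega
  · intro hcase
    rw [kplus, if_neg (by norm_num : ¬((2:ℕ) < 1))]
    apply IsGreatest.csSup_eq
    constructor
    · rcases lt_or_ge 0 (min ((b1:ℤ)+1) (b2:ℤ)) with hK | hK
      · refine Or.inr ⟨hK, ?_⟩
        rw [hpt21, hΛ']
        exact part3_insupp _ _ _ _ _ (by omega) (by omega) hX0 hY0 (by omega) (by omega)
          (by omega) (by omega)
      · exact Or.inl (by simp; omega)
    · rintro n (hn | ⟨hn0, hns⟩)
      · simp at hn; omega
      · have h0 := hns [] (by simp)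
        simp only [List.foldr_nil] at h0
        rw [hpt21, hΛ'] at h0
        have := (leRoot_iff _ _ _ _).1 h0
        omega
  · rintro ⟨hw1, hbb⟩
    rw [kplus, if_neg (by norm_num : ¬((2:ℕ) < 1))]
    apply IsGreatest.csSup_eq
    constructor
    · rcases lt_or_ge 0 (min ((b1:ℤ)+1) (b2:ℤ) - 1) with hK | hK
      · refine Or.inr ⟨hK, ?_⟩
        rw [hpt21, hΛ']
        exact part4_insupp _ _ _ _ _ (by omega) (by omega) (by omega) (by omega) (by omega)
      · exact Or.inl (by simp; omega)
    · rintro n (hn | ⟨hn0, hns⟩)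
      · simp at hn; omega
      · have h0 := hns [1] (by simp)
        simp only [List.foldr_cons, List.foldr_nil] at h0
        rw [hpt21, hΛ', sAct1] at h0
        have := (leRoot_iff _ _ _ _).1 h0
        omega


end SleHat
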